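/- Let (A,C)_ψ be the canonical entwining structure of a coalgebra-Galois extension B ⊆ A with bijective canonical map can : A ⊗_B A → A ⊗ C. An element x = Σ aᵢ ⊗ cᵢ ∈ A ⊗ C is an integral in (A,C)_ψ (i.e. a·x = x·a for all a, where x·a = Σ aᵢψ(cᵢ⊗a)) if and only if the element x^τ = Σ aᵢ·can^{-1}(1⊗cᵢ) ∈ A ⊗_B A is central for the (A,A)-bimodule structure: a·x^τ = x^τ·a for all a ∈ A. -/
import Mathlib


open TensorProduct LinearMap

noncomputable section

variable (k A C : Type*) [CommRing k] [Ring A] [Algebra k A]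
  [AddCommGroup C] [Module k C] [Coalgebra k C]

/-- An entwining structure `(A,C)_ψ` over `k`. -/
structure Entwining where
  psi : C ⊗[k] A →ₗ[k] A ⊗[k] C
  mul_compat :
    psi ∘ₗ lTensor C (LinearMap.mul' k A)
      = rTensor C (LinearMap.mul' k A)
        ∘ₗ (TensorProduct.assoc k A A C).symm.toLinearMap
        ∘ₗ lTensor A psi
        ∘ₗ (TensorProduct.assoc k A C A).toLinearMap
        ∘ₗ rTensor A psi
        ∘ₗ (TensorProduct.assoc k C A A).symm.toLinearMap
  one_compat : ∀ c : C, psi (c ⊗ₜ[k] (1 : A)) = (1 : A) ⊗ₜ[k] c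
  comul_compat :
    lTensor A (Coalgebra.comul (R := k) (A := C)) ∘ₗ psi
      = (TensorProduct.assoc k A C C).toLinearMap
        ∘ₗ rTensor C psi
        ∘ₗ (TensorProduct.assoc k C A C).symm.toLinearMap
        ∘ₗ lTensor C psi
        ∘ₗ (TensorProduct.assoc k C C A).toLinearMap
        ∘ₗ rTensor A (Coalgebra.comul (R := k) (A := C))
  counit_compat : ∀ (c : C) (a : A),
    (TensorProduct.rid k A)
        ((lTensor A (Coalgebra.counit (R := k) (A := C))) (psi (c ⊗ₜ[k] a)))
      = Coalgebra.counit (R := k) c • a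

variable {k A C} in
/-- `act` is a unital associative right `A`-action on `M`. -/
def IsRAction {M : Type*} [AddCommGroup M] [Module k M]
    (act : M ⊗[k] A →ₗ[k] M) : Prop :=
  (∀ m : M, act (m ⊗ₜ[k] (1 : A)) = m) ∧
  act ∘ₗ lTensor M (LinearMap.mul' k A)
    = act ∘ₗ rTensor A act ∘ₗ (TensorProduct.assoc k M A A).symm.toLinearMap

variable {k A C} in
/-- `coact` is a counital coassociative right `C`-coaction on `M`. -/
def IsRCoaction {M : Type*} [AddCommGroup M] [Module k M]
    (coact : M →ₗ[k] M ⊗[k] C) : Prop :=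
  (∀ m : M, (TensorProduct.rid k M)
      ((lTensor M (Coalgebra.counit (R := k) (A := C))) (coact m)) = m) ∧
  rTensor C coact ∘ₗ coact
    = (TensorProduct.assoc k M C C).symm.toLinearMap
      ∘ₗ lTensor M (Coalgebra.comul (R := k) (A := C)) ∘ₗ coact

variable {k A C} in
/-- The compatibility condition making `(M, act, coact)` an entwined
`(A,C)_ψ`-module: `ρ^M(m·a) = m₍₀₎·a_α ⊗ m₍₁₎^α`. -/
def IsEntwinedModule (E : Entwining k A C) {M : Type*} [AddCommGroup M] [Module k M]
    (act : M ⊗[k] A →ₗ[k] M) (coact : M →ₗ[k] M ⊗[k] C) : Prop :=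
  IsRAction act ∧ IsRCoaction coact ∧
  coact ∘ₗ act
    = rTensor C act
      ∘ₗ (TensorProduct.assoc k M A C).symm.toLinearMap
      ∘ₗ lTensor M E.psi
      ∘ₗ (TensorProduct.assoc k M C A).toLinearMap
      ∘ₗ rTensor A coact

variable {k A C} in
/-- A morphism of entwined modules: right `A`-linear and right `C`-colinear. -/
def IsEntwinedHom {M N : Type*} [AddCommGroup M] [Module k M]
    [AddCommGroup N] [Module k N]
    (actM : M ⊗[k] A →ₗ[k] M) (coactM : M →ₗ[k] M ⊗[k] C)
    (actN : N ⊗[k] A →ₗ[k] N) (coactN : N →ₗ[k] N ⊗[k] C)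
    (f : M →ₗ[k] N) : Prop :=
  (f ∘ₗ actM = actN ∘ₗ rTensor A f) ∧ (coactN ∘ₗ f = rTensor C f ∘ₗ coactM)

variable {k A C} in
/-- The submodule of `A ⊗ A` by which one divides to get `A ⊗_B A`, where
`B = {b ∈ A | ρ^A(ba) = b ρ^A(a)}`: it is spanned by the elements
`(a b) ⊗ a' - a ⊗ (b a')` for `b ∈ B`. -/
def galRel (ρA : A →ₗ[k] A ⊗[k] C) : Submodule k (A ⊗[k] A) :=
  Submodule.span k
    {x : A ⊗[k] A | ∃ b : A,
      (∀ a : A, ρA (b * a) = rTensor C (LinearMap.mulLeft k b) (ρA a)) ∧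
      ∃ a a' : A, x = (a * b) ⊗ₜ[k] a' - a ⊗ₜ[k] (b * a')}

/-- for the canonical entwining structure of a coalgebra-Galois
extension `B ⊆ A` (with bijective `can : A ⊗_B A → A ⊗ C`), an element
`x ∈ A ⊗ C` is an integral iff `x^τ = Σ aᵢ can⁻¹(1 ⊗ cᵢ) ∈ A ⊗_B A` is central
for the `(A,A)`-bimodule structure. -/
theorem galois_integral_iff_central
    (ρA : A →ₗ[k] A ⊗[k] C) (hρ : IsRCoaction ρA)
    -- the canonical map `can : A ⊗_B A → A ⊗ C`, `a ⊗ a' ↦ a ρ^A(a')`,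
    -- assumed bijective:
    (canE : ((A ⊗[k] A) ⧸ galRel ρA) ≃ₗ[k] A ⊗[k] C)
    (hcan : ∀ a a' : A,
      canE ((galRel ρA).mkQ (a ⊗ₜ[k] a'))
        = rTensor C (LinearMap.mulLeft k a) (ρA a'))
    -- the right `A`-action on `A ⊗_B A` (multiplication in the second factor):
    (actQ : ((A ⊗[k] A) ⧸ galRel ρA) ⊗[k] A →ₗ[k] ((A ⊗[k] A) ⧸ galRel ρA))
    (hactQ : ∀ (y : A ⊗[k] A) (a : A),
      actQ ((galRel ρA).mkQ y ⊗ₜ[k] a)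
        = (galRel ρA).mkQ (lTensor A (LinearMap.mulRight k a) y))
    -- the left `A`-action on `A ⊗_B A` (multiplication in the first factor):
    (lactQ : A ⊗[k] ((A ⊗[k] A) ⧸ galRel ρA) →ₗ[k] ((A ⊗[k] A) ⧸ galRel ρA))
    (hlactQ : ∀ (a : A) (y : A ⊗[k] A),
      lactQ (a ⊗ₜ[k] (galRel ρA).mkQ y)
        = (galRel ρA).mkQ (rTensor A (LinearMap.mulLeft k a) y)) :
    -- the canonical entwining map `ψ(c ⊗ a) = can(can⁻¹(1 ⊗ c) a)`:
    let ψL : C ⊗[k] A →ₗ[k] A ⊗[k] C :=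
      canE.toLinearMap ∘ₗ actQ
        ∘ₗ rTensor A (canE.symm.toLinearMap ∘ₗ (TensorProduct.mk k A C) (1 : A))
    -- the right action of `A` on `A ⊗ C` from Example 2.4(1):
    let RA : (A ⊗[k] C) ⊗[k] A →ₗ[k] A ⊗[k] C :=
      rTensor C (LinearMap.mul' k A)
        ∘ₗ (TensorProduct.assoc k A A C).symm.toLinearMap
        ∘ₗ lTensor A ψL
        ∘ₗ (TensorProduct.assoc k A C A).toLinearMap
    -- `x ↦ x^τ = Σ aᵢ can⁻¹(1 ⊗ cᵢ)`:
    let τ : A ⊗[k] C →ₗ[k] ((A ⊗[k] A) ⧸ galRel ρA) :=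
      lactQ ∘ₗ lTensor A (canE.symm.toLinearMap ∘ₗ (TensorProduct.mk k A C) (1 : A))
    ∀ x : A ⊗[k] C,
      (∀ a : A, rTensor C (LinearMap.mulLeft k a) x = RA (x ⊗ₜ[k] a))
        ↔ (∀ a : A, lactQ (a ⊗ₜ[k] τ x) = actQ (τ x ⊗ₜ[k] a)) := by
  intro ψL RA τ x
  -- canE is left A-linear
  have hL1 : ∀ (a : A) (q : (A ⊗[k] A) ⧸ galRel ρA),
      canE (lactQ (a ⊗ₜ[k] q)) = rTensor C (LinearMap.mulLeft k a) (canE q) := by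
    intro a q
    obtain ⟨y, rfl⟩ := Submodule.mkQ_surjective _ q
    induction y using TensorProduct.induction_on with
    | zero => simp
    | tmul u v =>
      rw [hlactQ]
      simp only [rTensor_tmul, LinearMap.mulLeft_apply, hcan, LinearMap.mulLeft_mul,
        rTensor_comp, LinearMap.comp_apply]
    | add y z hy hz =>
      simp only [map_add, tmul_add] at *
      rw [hy, hz]
  -- canE ∘ τ = id
  have hL2 : ∀ x : A ⊗[k] C, canE (τ x) = x := by
    intro x
    induction x using TensorProduct.induction_on with
    | zero => simp [τ]
    | tmul a c =>
      have : τ (a ⊗ₜ[k] c) = lactQ (a ⊗ₜ[k] canE.symm ((1 : A) ⊗ₜ[k] c)) := rfl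
      rw [this, hL1]
      simp
    | add y z hy hz => simp only [map_add, hy, hz]
  -- left and right actions commute
  have hL3 : ∀ (a b : A) (q : (A ⊗[k] A) ⧸ galRel ρA),
      lactQ (a ⊗ₜ[k] actQ (q ⊗ₜ[k] b)) = actQ (lactQ (a ⊗ₜ[k] q) ⊗ₜ[k] b) := by
    intro a b q
    obtain ⟨y, rfl⟩ := Submodule.mkQ_surjective _ q
    rw [hactQ, hlactQ, hlactQ, hactQ]
    congr 1
    induction y using TensorProduct.induction_on with
    | zero => simp
    | tmul u v => simp
    | add y z hy hz => simp only [map_add, hy, hz]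
  -- RA in terms of τ
  have hmul : ∀ (a' : A) (w : A ⊗[k] C),
      rTensor C (LinearMap.mul' k A)
        ((TensorProduct.assoc k A A C).symm (a' ⊗ₜ[k] w))
      = rTensor C (LinearMap.mulLeft k a') w := by
    intro a' w
    induction w using TensorProduct.induction_on with
    | zero => simp
    | tmul u d => simp
    | add y z hy hz => simp only [tmul_add, map_add, hy, hz]
  have hL4 : ∀ (x : A ⊗[k] C) (a : A), RA (x ⊗ₜ[k] a) = canE (actQ (τ x ⊗ₜ[k] a)) := by
    intro x a
    induction x using TensorProduct.induction_on with
    | zero => simp [RA, τ]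
    | tmul a' c =>
      have hRA : RA ((a' ⊗ₜ[k] c) ⊗ₜ[k] a)
          = rTensor C (LinearMap.mul' k A)
              ((TensorProduct.assoc k A A C).symm (a' ⊗ₜ[k] ψL (c ⊗ₜ[k] a))) := rfl
      have hψ : ψL (c ⊗ₜ[k] a) = canE (actQ (canE.symm ((1:A) ⊗ₜ[k] c) ⊗ₜ[k] a)) := rfl
      have hτ : τ (a' ⊗ₜ[k] c) = lactQ (a' ⊗ₜ[k] canE.symm ((1:A) ⊗ₜ[k] c)) := rfl
      rw [hRA, hmul, hψ, ← hL1, hL3, hτ]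
    | add y z hy hz =>
      simp only [map_add, TensorProduct.add_tmul, hy, hz]
  constructor
  · intro h a
    apply canE.injective
    rw [← hL4, ← h, hL1, hL2]
  · intro h a
    rw [hL4, ← h, hL1, hL2]
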